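/- Let A ∈ 𝔄 have the expansion A = Σ_{𝔍,𝔍'∈𝒫₊} a_{𝔍𝔍'}·Θ(C_𝔍)∘C_{𝔍'}. Then A is reflection invariant, i.e. Θ(A) = A, if and only if the coefficient matrix is hermitian: a_{𝔍'𝔍} = conj(a_{𝔍𝔍'}) for all 𝔍, 𝔍' ∈ 𝒫₊. -/

import Mathlib

open ComplexOrder

noncomputable section

/-- The setting of the paper: a finite set `Λ` with a fixed-point free involution `ϑ`
exchanging `Λp` and its complement, the Clifford algebra (algebra of Majoranas) `carrier`
with self-adjoint generators `c i`, the global gauge automorphism `gauge`, the antilinear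
reflection `*`-automorphism `Θ`, a square root `ζ` of `-1`, the twisted product `twist`,
a choice `P` of orderings of the subsets of `Λp` (giving the bases
`{C J : J ∈ P}` of `𝔄₊` and `{Θ(C J) ∘ C J' : J, J' ∈ P}` of `𝔄`),
and the tracial state `Tr` picking out the coefficient of `1` in the basis expansion. -/
structure MajoranaSetting where
  Λ : Type
  [fintypeΛ : Fintype Λ]
  [deceqΛ : DecidableEq Λ]
  ϑ : Λ → Λ
  ϑ_invol : Function.Involutive ϑ
  ϑ_fixfree : ∀ i, ϑ i ≠ i
  Λp : Finset Λ
  ϑ_exch : ∀ i, i ∈ Λp ↔ ϑ i ∉ Λp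
  carrier : Type
  [nring : NormedRing carrier]
  [nalg : NormedAlgebra ℂ carrier]
  [cmpl : CompleteSpace carrier]
  [starring : StarRing carrier]
  [starmod : StarModule ℂ carrier]
  c : Λ → carrier
  c_star : ∀ i, star (c i) = c i
  clifford : ∀ i j, c i * c j + c j * c i = if i = j then (2 : carrier) else 0
  gauge : carrier ≃ₐ[ℂ] carrier
  gauge_c : ∀ i, gauge (c i) = - c i
  Θ : carrier → carrier
  Θ_add : ∀ x y, Θ (x + y) = Θ x + Θ y
  Θ_smul : ∀ (z : ℂ) (x), Θ (z • x) = (starRingEnd ℂ z) • Θ x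
  Θ_mul : ∀ x y, Θ (x * y) = Θ x * Θ y
  Θ_star : ∀ x, Θ (star x) = star (Θ x)
  Θ_invol : ∀ x, Θ (Θ x) = x
  Θ_c : ∀ i, Θ (c i) = c (ϑ i)
  ζ : ℂ
  ζ_sq : ζ ^ 2 = -1
  twist : carrier → carrier → carrier
  twist_add_left : ∀ x x' y, twist (x + x') y = twist x y + twist x' y
  twist_add_right : ∀ x y y', twist x (y + y') = twist x y + twist x y'
  twist_smul_left : ∀ (z : ℂ) (x y), twist (z • x) y = z • twist x y
  twist_smul_right : ∀ (z : ℂ) (x y), twist x (z • y) = z • twist x y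
  twist_spec : ∀ (Am Ap Bm Bp : carrier) (a b a' b' : ℕ),
    a ≤ 1 → b ≤ 1 → a' ≤ 1 → b' ≤ 1 →
    Am ∈ Algebra.adjoin ℂ (c '' {i | i ∉ Λp}) →
    Ap ∈ Algebra.adjoin ℂ (c '' {i | i ∈ Λp}) →
    Bm ∈ Algebra.adjoin ℂ (c '' {i | i ∉ Λp}) →
    Bp ∈ Algebra.adjoin ℂ (c '' {i | i ∈ Λp}) →
    gauge Am = ((-1 : ℂ) ^ a) • Am →
    gauge Ap = ((-1 : ℂ) ^ b) • Ap →
    gauge Bm = ((-1 : ℂ) ^ a') • Bm →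
    gauge Bp = ((-1 : ℂ) ^ b') • Bp →
    twist (Am * Ap) (Bm * Bp)
      = ζ ^ ((a * b' : ℤ) - (b * a' : ℤ)) • (Am * Ap * (Bm * Bp))
  P : Finset (List Λ)
  P_nodup : ∀ J ∈ P, J.Nodup
  P_sub : ∀ J ∈ P, ∀ i ∈ J, i ∈ Λp
  P_unique : ∀ s : Finset Λ, s ⊆ Λp → ∃! J, J ∈ P ∧ J.toFinset = s
  Tr : carrier →ₗ[ℂ] ℂ
  Tr_basis : ∀ J ∈ P, ∀ J' ∈ P,
    Tr (twist (Θ ((J.map c).prod)) ((J'.map c).prod))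
      = if J = [] ∧ J' = [] then 1 else 0
  basis_indep : LinearIndependent ℂ
    (fun p : {J // J ∈ P} × {J // J ∈ P} =>
      twist (Θ ((p.1.1.map c).prod)) ((p.2.1.map c).prod))
  basis_span : ∀ x : carrier, x ∈ Submodule.span ℂ
    (Set.range fun p : {J // J ∈ P} × {J // J ∈ P} =>
      twist (Θ ((p.1.1.map c).prod)) ((p.2.1.map c).prod))
  plus_span : ∀ x ∈ Algebra.adjoin ℂ (c '' {i | i ∈ Λp}),
    x ∈ Submodule.span ℂ (Set.range fun J : {J // J ∈ P} => ((J.1.map c).prod))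

attribute [instance] MajoranaSetting.fintypeΛ MajoranaSetting.deceqΛ
  MajoranaSetting.nring MajoranaSetting.nalg MajoranaSetting.cmpl
  MajoranaSetting.starring MajoranaSetting.starmod

namespace MajoranaSetting

variable (S : MajoranaSetting)

/-- The subalgebra `𝔄₊` generated by the Majoranas on the `+` side. -/
def Aplus : Subalgebra ℂ S.carrier := Algebra.adjoin ℂ (S.c '' {i | i ∈ S.Λp})

/-- The subalgebra `𝔄₋` generated by the Majoranas on the `-` side. -/
def Aminus : Subalgebra ℂ S.carrier := Algebra.adjoin ℂ (S.c '' {i | i ∉ S.Λp})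

/-- The monomial `C_𝔍 = c_{i₁} ⋯ c_{i_k}`. -/
def C (J : List S.Λ) : S.carrier := (J.map S.c).prod

/-- `q_𝔍 = (-1)^{k(k-1)/2}`. -/
def q (J : List S.Λ) : ℂ := (-1 : ℂ) ^ (J.length * (J.length - 1) / 2)

/-- `s_𝔍 = ζ^{k(k-1)/2}`. -/
def sgn (J : List S.Λ) : ℂ := S.ζ ^ (J.length * (J.length - 1) / 2)

/-- The exponential `e^x` in the (finite-dimensional) algebra `𝔄`. -/
def expm (x : S.carrier) : S.carrier := NormedSpace.exp x

/-- The Hamiltonian `H = -∑_{𝔍,𝔍' ∈ 𝒫₊} J_{𝔍𝔍'} Θ(C_𝔍) ∘ C_𝔍'`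
determined by coupling constants `Jc`. -/
def Ham (Jc : List S.Λ → List S.Λ → ℂ) : S.carrier :=
  - ∑ J ∈ S.P, ∑ J' ∈ S.P, Jc J J' • S.twist (S.Θ (S.C J)) (S.C J')

/-- The index type of the basis `{C J : J ∈ 𝒫₊}`. -/
abbrev PIdx := {J : List S.Λ // J ∈ S.P}

/-- The index type `𝒫₊ - {∅}` of couplings across the reflection plane. -/
abbrev PIdx0 := {p : S.PIdx // p.1 ≠ []}

/-- The full matrix of coupling constants. -/
def Jmat (Jc : List S.Λ → List S.Λ → ℂ) : Matrix S.PIdx S.PIdx ℂ :=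
  Matrix.of fun p q => Jc p.1 q.1

/-- The matrix `J⁰` of coupling constants across the reflection plane. -/
def Jmat0 (Jc : List S.Λ → List S.Λ → ℂ) : Matrix S.PIdx0 S.PIdx0 ℂ :=
  Matrix.of fun p q => Jc p.1.1 q.1.1

end MajoranaSetting

namespace MajoranaSetting

variable {S : MajoranaSetting}

lemma Θ_zero : S.Θ 0 = 0 := by
  have h := S.Θ_add 0 0
  rw [add_zero] at h
  exact (left_eq_add.mp h)

lemma Θ_injective : Function.Injective S.Θ :=
  Function.Involutive.injective S.Θ_invol

lemma Θ_one : S.Θ 1 = 1 := by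
  apply Θ_injective
  have h := S.Θ_mul 1 (S.Θ 1)
  rw [one_mul, S.Θ_invol, mul_one] at h
  rw [S.Θ_invol]
  exact h

/-- `Θ` as an additive monoid hom, for `map_sum`. -/
def Θhom : S.carrier →+ S.carrier where
  toFun := S.Θ
  map_zero' := Θ_zero
  map_add' := S.Θ_add

lemma Θ_prod (J : List S.Λ) :
    S.Θ ((J.map S.c).prod) = (((J.map S.ϑ).map S.c)).prod := by
  induction J with
  | nil => simpa using Θ_one
  | cons i J ih =>
    simp only [List.map_cons, List.prod_cons]
    rw [S.Θ_mul, S.Θ_c, ih]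

lemma gauge_prod (J : List S.Λ) :
    S.gauge ((J.map S.c).prod) = ((-1 : ℂ) ^ J.length) • (J.map S.c).prod := by
  induction J with
  | nil => simp
  | cons i J ih =>
    simp only [List.map_cons, List.prod_cons, List.length_cons]
    rw [map_mul, S.gauge_c i, ih, neg_mul, mul_smul_comm, pow_succ, mul_neg_one,
      neg_smul]

lemma c_anticomm {i j : S.Λ} (h : i ≠ j) : S.c i * S.c j = -(S.c j * S.c i) := by
  have hc := S.clifford i j
  rw [if_neg h] at hc
  exact eq_neg_of_add_eq_zero_left hc

lemma c_comm_prod (i : S.Λ) (M : List S.Λ) (h : ∀ j ∈ M, j ≠ i) :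
    S.c i * (M.map S.c).prod = ((-1 : ℂ) ^ M.length) • ((M.map S.c).prod * S.c i) := by
  induction M with
  | nil => simp
  | cons j M ih =>
    simp only [List.map_cons, List.prod_cons, List.length_cons]
    have hij : i ≠ j := fun e => (h j (by simp)) e.symm
    rw [← mul_assoc, c_anticomm hij, neg_mul, mul_assoc,
      ih (fun k hk => h k (List.mem_cons_of_mem _ hk)), mul_smul_comm, pow_succ,
      mul_comm ((-1:ℂ) ^ M.length) (-1), mul_smul, neg_smul, one_smul,
      mul_assoc]

lemma prod_comm_prod (L M : List S.Λ) (h : ∀ i ∈ L, ∀ j ∈ M, j ≠ i) :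
    (L.map S.c).prod * (M.map S.c).prod
      = ((-1 : ℂ) ^ (L.length * M.length)) • ((M.map S.c).prod * (L.map S.c).prod) := by
  induction L with
  | nil => simp
  | cons i L ih =>
    simp only [List.map_cons, List.prod_cons, List.length_cons]
    rw [mul_assoc, ih (fun x hx => h x (List.mem_cons_of_mem _ hx)), mul_smul_comm,
      ← mul_assoc, c_comm_prod i M (h i (List.mem_cons_self)), smul_mul_assoc,
      smul_smul, ← pow_add, mul_assoc]
    congr 2
    ring

lemma prod_mem_adjoin (s : Set S.Λ) (J : List S.Λ) (h : ∀ i ∈ J, i ∈ s) :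
    (J.map S.c).prod ∈ Algebra.adjoin ℂ (S.c '' s) := by
  induction J with
  | nil => simpa using Subalgebra.one_mem _
  | cons i J ih =>
    simp only [List.map_cons, List.prod_cons]
    exact Subalgebra.mul_mem _
      (Algebra.subset_adjoin ⟨i, h i (List.mem_cons_self), rfl⟩)
      (ih (fun k hk => h k (List.mem_cons_of_mem _ hk)))

lemma ζ_ne_zero : S.ζ ≠ 0 := by
  intro h
  have := S.ζ_sq
  rw [h] at this
  simp at this

lemma conj_ζ : starRingEnd ℂ S.ζ = -S.ζ := by
  have h : (S.ζ - Complex.I) * (S.ζ + Complex.I) = 0 := by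
    linear_combination S.ζ_sq - Complex.I_sq
  rcases mul_eq_zero.mp h with h1 | h1
  · have : S.ζ = Complex.I := by linear_combination h1
    rw [this, Complex.conj_I]
  · have : S.ζ = -Complex.I := by linear_combination h1
    rw [this]
    simp [Complex.conj_I]

lemma twist_basis (J J' : List S.Λ) (hJ : ∀ i ∈ J, i ∈ S.Λp) (hJ' : ∀ i ∈ J', i ∈ S.Λp) :
    S.twist (S.Θ ((J.map S.c).prod)) ((J'.map S.c).prod)
      = S.ζ ^ ((J.length % 2) * (J'.length % 2))
          • (S.Θ ((J.map S.c).prod) * (J'.map S.c).prod) := by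
  have hΘJ : S.Θ ((J.map S.c).prod) = ((J.map S.ϑ).map S.c).prod := Θ_prod J
  have hmemm : ((J.map S.ϑ).map S.c).prod ∈ Algebra.adjoin ℂ (S.c '' {i | i ∉ S.Λp}) := by
    apply prod_mem_adjoin
    intro i hi
    rcases List.mem_map.mp hi with ⟨j, hj, rfl⟩
    exact (S.ϑ_exch j).mp (hJ j hj)
  have hmemp : ((J'.map S.c)).prod ∈ Algebra.adjoin ℂ (S.c '' {i | i ∈ S.Λp}) :=
    prod_mem_adjoin _ _ hJ'
  have honep : (1 : S.carrier) ∈ Algebra.adjoin ℂ (S.c '' {i | i ∈ S.Λp}) :=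
    Subalgebra.one_mem _
  have honem : (1 : S.carrier) ∈ Algebra.adjoin ℂ (S.c '' {i | i ∉ S.Λp}) :=
    Subalgebra.one_mem _
  have hg1 : S.gauge 1 = ((-1 : ℂ) ^ (0 : ℕ)) • (1 : S.carrier) := by simp
  have hgm : S.gauge (((J.map S.ϑ).map S.c).prod)
      = ((-1 : ℂ) ^ (J.length % 2)) • ((J.map S.ϑ).map S.c).prod := by
    rw [gauge_prod, List.length_map, neg_one_pow_eq_pow_mod_two]
  have hgp : S.gauge ((J'.map S.c).prod)
      = ((-1 : ℂ) ^ (J'.length % 2)) • (J'.map S.c).prod := by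
    rw [gauge_prod, neg_one_pow_eq_pow_mod_two]
  have key := S.twist_spec (((J.map S.ϑ).map S.c).prod) 1 1 ((J'.map S.c).prod)
    (J.length % 2) 0 0 (J'.length % 2)
    (Nat.le_of_lt_succ (Nat.mod_lt _ (by norm_num)))
    (Nat.zero_le 1) (Nat.zero_le 1)
    (Nat.le_of_lt_succ (Nat.mod_lt _ (by norm_num)))
    hmemm honep honem hmemp hgm hg1 hg1 hgp
  rw [mul_one, one_mul] at key
  rw [hΘJ, key]
  congr 1

lemma Θ_twist_basis (J J' : List S.Λ) (hJ : ∀ i ∈ J, i ∈ S.Λp)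
    (hJ' : ∀ i ∈ J', i ∈ S.Λp) :
    S.Θ (S.twist (S.Θ ((J.map S.c).prod)) ((J'.map S.c).prod))
      = S.twist (S.Θ ((J'.map S.c).prod)) ((J.map S.c).prod) := by
  rw [twist_basis J J' hJ hJ', twist_basis J' J hJ' hJ]
  rw [S.Θ_smul, S.Θ_mul, S.Θ_invol]
  rw [Θ_prod J']
  have hcomm := prod_comm_prod (S := S) J (J'.map S.ϑ) (by
    intro i hi j hj heq
    rcases List.mem_map.mp hj with ⟨k, hk, rfl⟩
    exact (S.ϑ_exch k).mp (hJ' k hk) (heq ▸ hJ i hi))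
  rw [hcomm, List.length_map, smul_smul]
  congr 1
  rw [map_pow, conj_ζ]
  have hmod : ((-1 : ℂ)) ^ (J.length * J'.length)
      = ((-1 : ℂ)) ^ ((J.length % 2) * (J'.length % 2)) := by
    rw [neg_one_pow_eq_pow_mod_two,
      neg_one_pow_eq_pow_mod_two (n := J.length % 2 * (J'.length % 2))]
    congr 1
    exact Nat.mul_mod _ _ 2
  rw [hmod, neg_pow, mul_comm (J'.length % 2) (J.length % 2)]
  have hsq : ((-1 : ℂ) ^ (J.length % 2 * (J'.length % 2))) ^ 2 = 1 := by
    rw [← pow_mul, mul_comm _ 2, pow_mul]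
    norm_num
  calc (-1 : ℂ) ^ (J.length % 2 * (J'.length % 2)) * S.ζ ^ (J.length % 2 * (J'.length % 2))
        * (-1 : ℂ) ^ (J.length % 2 * (J'.length % 2))
      = ((-1 : ℂ) ^ (J.length % 2 * (J'.length % 2))) ^ 2
          * S.ζ ^ (J.length % 2 * (J'.length % 2)) := by ring
    _ = S.ζ ^ (J.length % 2 * (J'.length % 2)) := by rw [hsq, one_mul]

lemma double_sum_eq (S : MajoranaSetting) (f : List S.Λ → List S.Λ → S.carrier) :
    (∑ p : S.PIdx × S.PIdx, f p.1.1 p.2.1) = ∑ J ∈ S.P, ∑ J' ∈ S.P, f J J' := by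
  rw [Fintype.sum_prod_type]
  calc ∑ J : S.PIdx, ∑ J' : S.PIdx, f J.1 J'.1
      = ∑ J : S.PIdx, ∑ J' ∈ S.P, f J.1 J' := by
        exact Finset.sum_congr rfl fun J _ => Finset.sum_coe_sort S.P (fun J' => f J.1 J')
    _ = ∑ J ∈ S.P, ∑ J' ∈ S.P, f J J' :=
        Finset.sum_coe_sort S.P (fun J => ∑ J' ∈ S.P, f J J')

end MajoranaSetting

/-- `A = ∑_{𝔍,𝔍'∈𝒫₊} a_{𝔍𝔍'} Θ(C_𝔍)∘C_𝔍'` is reflection invariant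
iff the coefficient matrix is hermitian. -/
theorem reflection_invariant_iff_hermitian_coeffs (S : MajoranaSetting)
    (a : List S.Λ → List S.Λ → ℂ) (A : S.carrier)
    (hA : A = ∑ J ∈ S.P, ∑ J' ∈ S.P, a J J' • S.twist (S.Θ (S.C J)) (S.C J')) :
    S.Θ A = A ↔ ∀ J ∈ S.P, ∀ J' ∈ S.P, a J' J = starRingEnd ℂ (a J J') := by
  classical
  have hΘA : S.Θ A = ∑ J ∈ S.P, ∑ J' ∈ S.P,
      (starRingEnd ℂ (a J' J)) • S.twist (S.Θ (S.C J)) (S.C J') := by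
    have h1 : S.Θ A = ∑ J ∈ S.P, ∑ J' ∈ S.P,
        (starRingEnd ℂ (a J J')) • S.twist (S.Θ (S.C J')) (S.C J) := by
      rw [hA]
      rw [show S.Θ = ⇑(MajoranaSetting.Θhom (S := S)) from rfl, map_sum]
      refine Finset.sum_congr rfl (fun J hJ => ?_)
      rw [map_sum]
      refine Finset.sum_congr rfl (fun J' hJ' => ?_)
      show S.Θ (a J J' • S.twist (S.Θ (S.C J)) (S.C J'))
        = (starRingEnd ℂ (a J J')) • S.twist (S.Θ (S.C J')) (S.C J)
      rw [S.Θ_smul]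
      simp only [MajoranaSetting.C]
      rw [MajoranaSetting.Θ_twist_basis J J' (S.P_sub J hJ) (S.P_sub J' hJ')]
    rw [h1, Finset.sum_comm]
  constructor
  · intro hinv J hJ J' hJ'
    have hkey : (∑ J ∈ S.P, ∑ J' ∈ S.P,
          (starRingEnd ℂ (a J' J)) • S.twist (S.Θ (S.C J)) (S.C J'))
        = ∑ J ∈ S.P, ∑ J' ∈ S.P, a J J' • S.twist (S.Θ (S.C J)) (S.C J') := by
      rw [← hΘA, ← hA, hinv]
    have hzero' : (∑ p : S.PIdx × S.PIdx,
        (starRingEnd ℂ (a p.2.1 p.1.1) - a p.1.1 p.2.1) •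
          S.twist (S.Θ (S.C p.1.1)) (S.C p.2.1)) = 0 := by
      rw [MajoranaSetting.double_sum_eq S
        (fun J J' => (starRingEnd ℂ (a J' J) - a J J') •
          S.twist (S.Θ (S.C J)) (S.C J'))]
      simp only [sub_smul]
      rw [show (∑ J ∈ S.P, ∑ J' ∈ S.P,
        ((starRingEnd ℂ (a J' J)) • S.twist (S.Θ (S.C J)) (S.C J')
          - a J J' • S.twist (S.Θ (S.C J)) (S.C J')))
        = (∑ J ∈ S.P, ∑ J' ∈ S.P,
            (starRingEnd ℂ (a J' J)) • S.twist (S.Θ (S.C J)) (S.C J'))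
          - ∑ J ∈ S.P, ∑ J' ∈ S.P, a J J' • S.twist (S.Θ (S.C J)) (S.C J') from by
          rw [← Finset.sum_sub_distrib]
          exact Finset.sum_congr rfl fun J _ => Finset.sum_sub_distrib _ _]
      rw [hkey, sub_self]
    have hzero : (∑ p : S.PIdx × S.PIdx,
        (starRingEnd ℂ (a p.2.1 p.1.1) - a p.1.1 p.2.1) •
          S.twist (S.Θ ((p.1.1.map S.c).prod)) ((p.2.1.map S.c).prod)) = 0 := hzero'
    have hli := Fintype.linearIndependent_iff.mp S.basis_indep
      (fun p => starRingEnd ℂ (a p.2.1 p.1.1) - a p.1.1 p.2.1) hzero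
      (⟨J, hJ⟩, ⟨J', hJ'⟩)
    have h2 : starRingEnd ℂ (a J' J) = a J J' := sub_eq_zero.mp hli
    calc a J' J = starRingEnd ℂ (starRingEnd ℂ (a J' J)) := (Complex.conj_conj _).symm
      _ = starRingEnd ℂ (a J J') := by rw [h2]
  · intro h
    rw [hΘA]
    conv_rhs => rw [hA]
    refine Finset.sum_congr rfl fun J hJ => Finset.sum_congr rfl fun J' hJ' => ?_
    congr 1
    exact (h J' hJ' J hJ).symm
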